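/- Let X be a topological space. Then X^ω is countably compact if and only if for every countable family γ of injective discrete sequences on X, ⋂_{ζ∈γ} u(ζ) ≠ ∅, where u(ζ) is the set of free ultrafilters p such that ζ has a p-limit in X. -/

import Mathlib

open Set Filter Topology Function

/-- A free ultrafilter on ℕ: one containing no singleton. -/
def FreeUF (p : Ultrafilter ℕ) : Prop := ∀ n : ℕ, ({n} : Set ℕ) ∉ p

/-- `l` is the `p`-limit of the sequence `x`. -/
def PLim {X : Type*} [TopologicalSpace X] (p : Ultrafilter ℕ) (x : ℕ → X) (l : X) : Prop :=
  Filter.Tendsto x (p : Filter ℕ) (nhds l)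

/-- A βω-space: the closure of any countably infinite discrete subset with compact closure
is homeomorphic to βℕ. -/
def BetaOmegaSpace (X : Type*) [TopologicalSpace X] : Prop :=
  ∀ M : Set X, M.Countable → M.Infinite → DiscreteTopology M → IsCompact (closure M) →
    Nonempty (closure M ≃ₜ StoneCech ℕ)

/-- Keisler–Rudin (Rudin–Keisler) order on ultrafilters on ℕ. -/
def RKle (p q : Ultrafilter ℕ) : Prop := ∃ f : ℕ → ℕ, Ultrafilter.map f q = p

/-- A homogeneous space. -/
def Homogeneous (X : Type*) [TopologicalSpace X] : Prop :=
  ∀ x y : X, ∃ h : X ≃ₜ X, h x = y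

/-- Countable compactness: every countable open cover has a finite subcover. -/
def CountablyCompact (X : Type*) [TopologicalSpace X] : Prop :=
  ∀ U : ℕ → Set X, (∀ n, IsOpen (U n)) → (⋃ n, U n) = Set.univ →
    ∃ t : Finset ℕ, (⋃ n ∈ t, U n) = Set.univ

section StmtTenAux

variable {X : Type*} [TopologicalSpace X]

/-- Every point of `S` is isolated in `S`, witnessed by open sets. -/
def IsolatedIn (S : Set X) : Prop := ∀ x ∈ S, ∃ U : Set X, IsOpen U ∧ x ∈ U ∧ U ∩ S ⊆ {x}

/-- Every nonempty relatively open subset of `S` is cofinite in `S`. -/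
def CofTrace (S : Set X) : Prop := ∀ U : Set X, IsOpen U → (U ∩ S).Nonempty → (S \ U).Finite

lemma isolatedIn_mono {S T : Set X} (h : IsolatedIn T) (hST : S ⊆ T) : IsolatedIn S := by
  intro x hx
  obtain ⟨U, hU, hxU, hsub⟩ := h x (hST hx)
  exact ⟨U, hU, hxU, fun y hy => hsub ⟨hy.1, hST hy.2⟩⟩

lemma isolatedIn_discrete {S : Set X} (h : IsolatedIn S) : DiscreteTopology S := by
  rw [discreteTopology_iff_isOpen_singleton]
  rintro ⟨x, hx⟩
  obtain ⟨U, hU, hxU, hsub⟩ := h x hx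
  have he : {(⟨x, hx⟩ : S)} = (Subtype.val) ⁻¹' U := by
    ext ⟨y, hy⟩
    simp only [mem_singleton_iff, Subtype.mk.injEq, mem_preimage]
    constructor
    · rintro rfl; exact hxU
    · intro hyU; exact (hsub ⟨hyU, hy⟩ : y ∈ ({x} : Set X))
  rw [he]
  exact hU.preimage continuous_subtype_val

lemma freeUF_compl_mem {p : Ultrafilter ℕ} (hp : FreeUF p) {s : Set ℕ} (hs : s.Finite) :
    sᶜ ∈ p := by
  rw [Ultrafilter.compl_mem_iff_notMem]
  intro hsp
  obtain ⟨a, ha, rfl⟩ := Ultrafilter.eq_pure_of_finite_mem hs hsp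
  exact hp a rfl

lemma dichotomy [T1Space X] {S : Set X} (hS : S.Infinite) :
    (∃ T ⊆ S, T.Infinite ∧ CofTrace T) ∨ (∃ T ⊆ S, T.Infinite ∧ IsolatedIn T) := by
  by_cases hc : ∃ T ⊆ S, T.Infinite ∧ CofTrace T
  · exact Or.inl hc
  right
  push_neg at hc
  have step : ∀ T : {T : Set X // T ⊆ S ∧ T.Infinite},
      ∃ q : X × Set X, ∃ T' : {T : Set X // T ⊆ S ∧ T.Infinite},
        IsOpen q.2 ∧ q.1 ∈ q.2 ∧ q.1 ∈ T.1 ∧ T'.1 ⊆ T.1 ∧ T'.1 ∩ q.2 = ∅ := by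
    rintro ⟨T, hTS, hT⟩
    have hnc : ¬ CofTrace T := hc T hTS hT
    unfold CofTrace at hnc
    push_neg at hnc
    obtain ⟨U, hU, hne, hinf⟩ := hnc
    obtain ⟨a, haU, haT⟩ := hne
    refine ⟨(a, U), ⟨T \ U, diff_subset.trans hTS, hinf⟩, hU, haU, haT, diff_subset, ?_⟩
    ext y; simp only [mem_inter_iff, mem_diff, mem_empty_iff_false, iff_false]
    tauto
  choose q T' h1 h2 h3 h4 h5 using step
  let chain : ℕ → {T : Set X // T ⊆ S ∧ T.Infinite} :=
    fun n => Nat.rec ⟨S, subset_rfl, hS⟩ (fun _ T => T' T) n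
  have hchainsucc : ∀ n, chain (n + 1) = T' (chain n) := fun n => rfl
  set a : ℕ → X := fun n => (q (chain n)).1 with ha
  set U : ℕ → Set X := fun n => (q (chain n)).2 with hU
  have hmono : ∀ i j, i ≤ j → (chain j).1 ⊆ (chain i).1 := by
    intro i j hij
    induction j, hij using Nat.le_induction with
    | base => exact subset_rfl
    | succ n hmn ih => exact (h4 (chain n)).trans ih
  have hmem : ∀ i j, i < j → a j ∈ (chain (i + 1)).1 := by
    intro i j hij
    exact hmono (i + 1) j hij (h3 (chain j))
  have hnotU : ∀ i j, i < j → a j ∉ U i := by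
    intro i j hij hmemU
    have : a j ∈ (chain (i + 1)).1 ∩ U i := ⟨hmem i j hij, hmemU⟩
    rw [hchainsucc, h5 (chain i)] at this
    exact this
  have hinj : Function.Injective a := by
    intro i j hij
    by_contra hne
    rcases Nat.lt_or_ge i j with h | h
    · exact hnotU i j h (hij ▸ h2 (chain i))
    · have : j < i := lt_of_le_of_ne h (Ne.symm hne)
      exact hnotU j i this (hij ▸ h2 (chain j))
  refine ⟨range a, ?_, infinite_range_of_injective hinj, ?_⟩
  · rintro _ ⟨i, rfl⟩
    exact (chain i).2.1 (h3 (chain i))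
  · rintro _ ⟨i, rfl⟩
    refine ⟨U i ∩ ⋂ j ∈ Finset.range i, ({a j}ᶜ : Set X), ?_, ?_, ?_⟩
    · exact (h1 (chain i)).inter (isOpen_biInter_finset fun j _ => isOpen_compl_singleton)
    · refine ⟨h2 (chain i), ?_⟩
      simp only [mem_iInter, mem_compl_iff, mem_singleton_iff]
      intro j hj
      exact fun h => absurd (hinj h.symm) (Nat.ne_of_lt (Finset.mem_range.mp hj))
    · rintro y ⟨⟨hyU, hyI⟩, ⟨j, rfl⟩⟩
      simp only [mem_iInter, mem_compl_iff, mem_singleton_iff] at hyI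
      rcases Nat.lt_trichotomy j i with h | h | h
      · exact absurd rfl (hyI j (Finset.mem_range.mpr h))
      · simp [h]
      · exact absurd hyU (hnotU i j h)

lemma seq_step [T1Space X] (ζ : ℕ → X) (M : Set ℕ) (hM : M.Infinite) :
    ∃ M' : Set ℕ, M' ⊆ M ∧ M'.Infinite ∧
      ((∃ x, ∀ n ∈ M', ζ n = x) ∨
       (Set.InjOn ζ M' ∧ (IsolatedIn (ζ '' M') ∨ CofTrace (ζ '' M')))) := by
  classical
  by_cases hfib : ∃ x, {n | n ∈ M ∧ ζ n = x}.Infinite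
  · obtain ⟨x, hx⟩ := hfib
    exact ⟨{n | n ∈ M ∧ ζ n = x}, fun n hn => hn.1, hx, Or.inl ⟨x, fun n hn => hn.2⟩⟩
  push_neg at hfib
  have himg : (ζ '' M).Infinite := by
    intro hfin
    have hsub : M ⊆ ⋃ y ∈ ζ '' M, {n | n ∈ M ∧ ζ n = y} := by
      intro n hn
      exact mem_biUnion (mem_image_of_mem ζ hn) ⟨hn, rfl⟩
    exact hM ((hfin.biUnion fun y _ => hfib y).subset hsub)
  -- injectivization
  let g : X → ℕ := fun y => if h : ∃ n, n ∈ M ∧ ζ n = y then h.choose else 0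
  have hg : ∀ y ∈ ζ '' M, g y ∈ M ∧ ζ (g y) = y := by
    intro y hy
    obtain ⟨n, hn, rfl⟩ := hy
    have h : ∃ n', n' ∈ M ∧ ζ n' = ζ n := ⟨n, hn, rfl⟩
    simp only [g, dif_pos h]
    exact h.choose_spec
  have hginj : Set.InjOn g (ζ '' M) := by
    intro y1 h1 y2 h2 he
    rw [← (hg y1 h1).2, ← (hg y2 h2).2, he]
  set M₁ : Set ℕ := g '' (ζ '' M) with hM₁
  have hM₁sub : M₁ ⊆ M := by rintro _ ⟨y, hy, rfl⟩; exact (hg y hy).1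
  have hM₁inf : M₁.Infinite := himg.image hginj
  have hinj₁ : Set.InjOn ζ M₁ := by
    rintro _ ⟨y1, hy1, rfl⟩ _ ⟨y2, hy2, rfl⟩ he
    rw [(hg y1 hy1).2, (hg y2 hy2).2] at he
    rw [he]
  have himg₁ : ζ '' M₁ = ζ '' M := by
    apply Subset.antisymm (image_mono (f := ζ) hM₁sub)
    rintro y hy
    have : ζ (g y) = y := (hg y hy).2
    exact ⟨g y, mem_image_of_mem g hy, this⟩
  have himg₁inf : (ζ '' M₁).Infinite := himg₁ ▸ himg
  have hdi : ∃ T, T ⊆ ζ '' M₁ ∧ T.Infinite ∧ (IsolatedIn T ∨ CofTrace T) := by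
    rcases dichotomy himg₁inf with ⟨T, a, b, c⟩ | ⟨T, a, b, c⟩
    exacts [⟨T, a, b, Or.inr c⟩, ⟨T, a, b, Or.inl c⟩]
  obtain ⟨T, hTsub, hTinf, hT⟩ := hdi
  have hTeq : ζ '' (M₁ ∩ ζ ⁻¹' T) = T := by
    apply Subset.antisymm
    · rintro _ ⟨n, ⟨_, hn2⟩, rfl⟩; exact hn2
    · intro y hy
      obtain ⟨n, hnM₁, rfl⟩ := hTsub hy
      exact ⟨n, ⟨hnM₁, hy⟩, rfl⟩
  refine ⟨M₁ ∩ ζ ⁻¹' T, inter_subset_left.trans hM₁sub, ?_, Or.inr ⟨hinj₁.mono inter_subset_left, by rw [hTeq]; exact hT⟩⟩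
  intro hfin
  exact hTinf (hTeq ▸ hfin.image ζ)

lemma key [T1Space X]
    (hyp : ∀ γ : Set (ℕ → X), γ.Countable →
        (∀ ζ ∈ γ, Function.Injective ζ ∧ DiscreteTopology ↥(Set.range ζ)) →
        ∃ p : Ultrafilter ℕ, FreeUF p ∧ ∀ ζ ∈ γ, ∃ x : X, PLim p ζ x)
    (Φ : ℕ → ℕ → X) :
    ∃ (p : Ultrafilter ℕ) (σ : ℕ → ℕ) (f : ℕ → X), FreeUF p ∧ StrictMono σ ∧
      Filter.Tendsto (fun n => Φ (σ n)) (p : Filter ℕ) (nhds f) := by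
  classical
  set ζ : ℕ → ℕ → X := fun k n => Φ n k with hζ
  -- the decreasing chain of infinite index sets
  choose F hF1 hF2 hF3 using fun (k : ℕ) (M : {M : Set ℕ // M.Infinite}) =>
    seq_step (ζ k) M.1 M.2
  let E : ℕ → {M : Set ℕ // M.Infinite} :=
    fun n => Nat.rec ⟨Set.univ, Set.infinite_univ⟩ (fun k M => ⟨F k M, hF2 k M⟩) n
  set C : ℕ → Set ℕ := fun k => (E (k + 1)).1 with hC
  have hCinf : ∀ k, (C k).Infinite := fun k => (E (k + 1)).2
  have hCsucc : ∀ k, C (k + 1) ⊆ C k := fun k => hF1 (k + 1) (E (k + 1))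
  have hCmono : ∀ k l, k ≤ l → C l ⊆ C k := by
    intro k l hkl
    induction l, hkl using Nat.le_induction with
    | base => exact subset_rfl
    | succ n hmn ih => exact (hCsucc n).trans ih
  have hCdisj : ∀ k, (∃ x, ∀ n ∈ C k, ζ k n = x) ∨
      (Set.InjOn (ζ k) (C k) ∧ (IsolatedIn (ζ k '' C k) ∨ CofTrace (ζ k '' C k))) :=
    fun k => hF3 k (E k)
  -- the interleaved diagonal and reserve sequences
  have exGt : ∀ (W : Set ℕ), W.Infinite → ∀ b : ℕ, ∃ x, x ∈ W ∧ b < x := by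
    intro W hW b
    by_contra h
    push_neg at h
    exact hW ((Set.finite_Iic b).subset (fun x hx => Set.mem_Iic.mpr (h x hx)))
  have pairEx : ∀ (k b : ℕ), ∃ v : ℕ × ℕ, v.1 ∈ C k ∧ v.2 ∈ C k ∧ b < v.1 ∧ v.1 < v.2 := by
    intro k b
    obtain ⟨x, hx, hbx⟩ := exGt _ (hCinf k) b
    obtain ⟨y, hy, hxy⟩ := exGt _ (hCinf k) x
    exact ⟨(x, y), hx, hy, hbx, hxy⟩
  choose v hv1 hv2 hv3 hv4 using pairEx
  let g : ℕ → ℕ × ℕ := fun k => Nat.rec (v 0 0) (fun k gk => v (k + 1) gk.2) k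
  set m : ℕ → ℕ := fun k => (g k).1 with hm
  set r : ℕ → ℕ := fun k => (g k).2 with hr
  have hg0 : g 0 = v 0 0 := rfl
  have hgs : ∀ k, g (k + 1) = v (k + 1) (r k) := fun k => rfl
  have hmC : ∀ k, m k ∈ C k := by
    intro k; cases k with
    | zero => exact hv1 0 0
    | succ k => exact hv1 (k + 1) (r k)
  have hrC : ∀ k, r k ∈ C k := by
    intro k; cases k with
    | zero => exact hv2 0 0
    | succ k => exact hv2 (k + 1) (r k)
  have hmr : ∀ k, m k < r k := by
    intro k; cases k with
    | zero => exact hv4 0 0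
    | succ k => exact hv4 (k + 1) (r k)
  have hrm : ∀ k, r k < m (k + 1) := fun k => hv3 (k + 1) (r k)
  have hmmono : StrictMono m := strictMono_nat_of_lt_succ fun k => (hmr k).trans (hrm k)
  have hrmono : StrictMono r := strictMono_nat_of_lt_succ fun k => (hrm k).trans (hmr (k + 1))
  have hrem : ∀ i j, r i ≠ m j := by
    intro i j he
    rcases Nat.lt_or_ge i j with h | h
    · have : r i < m j := (hrm i).trans_le (hmmono.monotone h)
      omega
    · have : m j ≤ m i := hmmono.monotone h
      have := hmr i
      omega
  have hmCk : ∀ k n, k ≤ n → m n ∈ C k := fun k n h => hCmono k n h (hmC n)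
  -- the sequences for the hypothesis
  let ι : ℕ → ℕ → ℕ := fun k n => if n < k then r (k + n) else m n
  let θ : ℕ → ℕ → X := fun k n => ζ k (ι k n)
  have hιC : ∀ k n, ι k n ∈ C k := by
    intro k n
    by_cases h : n < k <;> simp only [ι, h, if_true, if_false, if_pos, if_neg]
    · exact hCmono k (k + n) (Nat.le_add_right k n) (hrC (k + n))
    · exact hmCk k n (Nat.le_of_not_lt h)
  have hιinj : ∀ k, Function.Injective (ι k) := by
    intro k n1 n2 he
    by_cases h1 : n1 < k <;> by_cases h2 : n2 < k <;>
      simp only [ι, h1, h2, if_true, if_false, if_pos, if_neg] at he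
    · have := hrmono.injective he; omega
    · exact absurd he (hrem (k + n1) n2)
    · exact absurd he.symm (hrem (k + n2) n1)
    · exact hmmono.injective he
  set D : Set ℕ := {k | Set.InjOn (ζ k) (C k) ∧ IsolatedIn (ζ k '' C k)} with hD
  set γ : Set (ℕ → X) := θ '' D with hγ
  have hγprop : ∀ ξ ∈ γ, Function.Injective ξ ∧ DiscreteTopology ↥(Set.range ξ) := by
    rintro _ ⟨k, hk, rfl⟩
    constructor
    · intro n1 n2 he
      exact hιinj k (hk.1 (hιC k n1) (hιC k n2) he)
    · apply isolatedIn_discrete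
      apply isolatedIn_mono hk.2
      rintro _ ⟨n, rfl⟩
      exact Set.mem_image_of_mem (ζ k) (hιC k n)
  obtain ⟨p, hfree, hlim⟩ := hyp γ ((Set.to_countable D).image θ) hγprop
  -- each coordinate has a p-limit along m
  have hlim' : ∀ k, ∃ x, Filter.Tendsto (fun n => ζ k (m n)) (p : Filter ℕ) (nhds x) := by
    intro k
    have hIio : ({n : ℕ | n < k} : Set ℕ).Finite := Set.finite_Iio k
    rcases hCdisj k with ⟨x, hx⟩ | ⟨hinj, hIC⟩
    · refine ⟨x, Filter.Tendsto.congr' ?_ tendsto_const_nhds⟩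
      refine Filter.mem_of_superset (freeUF_compl_mem hfree hIio) ?_
      intro n hn
      simp only [Set.mem_compl_iff, Set.mem_setOf_eq, not_lt] at hn
      exact (hx (m n) (hmCk k n hn)).symm
    rcases hIC with iso | cof
    · obtain ⟨x, hx⟩ := hlim (θ k) ⟨k, ⟨hinj, iso⟩, rfl⟩
      refine ⟨x, Filter.Tendsto.congr' ?_ hx⟩
      refine Filter.mem_of_superset (freeUF_compl_mem hfree hIio) ?_
      intro n hn
      simp only [Set.mem_compl_iff, Set.mem_setOf_eq, not_lt] at hn
      show θ k n = ζ k (m n)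
      simp only [θ, ι, if_neg (Nat.not_lt.mpr hn)]
    · refine ⟨ζ k (m k), ?_⟩
      intro U hU
      rw [Filter.mem_map]
      obtain ⟨V, hVU, hVopen, hbV⟩ := mem_nhds_iff.mp hU
      have hfin : ((ζ k '' C k) \ V).Finite :=
        cof V hVopen ⟨ζ k (m k), hbV, Set.mem_image_of_mem (ζ k) (hmC k)⟩
      have hA : ({n : ℕ | k ≤ n ∧ ζ k (m n) ∈ (ζ k '' C k) \ V}).Finite := by
        apply Set.Finite.of_finite_image (f := fun n => ζ k (m n))
        · exact hfin.subset (by rintro _ ⟨n, hn, rfl⟩; exact hn.2)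
        · intro n1 hn1 n2 hn2 he
          exact hmmono.injective (hinj (hmCk k n1 hn1.1) (hmCk k n2 hn2.1) he)
      have hsup : ({n : ℕ | n < k} ∪ {n : ℕ | k ≤ n ∧ ζ k (m n) ∈ (ζ k '' C k) \ V})ᶜ ⊆
          (fun n => ζ k (m n)) ⁻¹' U := by
        intro n hn
        simp only [Set.mem_compl_iff, Set.mem_union, Set.mem_setOf_eq, not_or, not_lt,
          not_and, not_le] at hn
        have hkn : k ≤ n := hn.1
        have : ζ k (m n) ∈ V := by
          by_contra hv
          exact (hn.2 hkn) ⟨Set.mem_image_of_mem (ζ k) (hmCk k n hkn), hv⟩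
        exact Set.mem_preimage.mpr (hVU this)
      exact Filter.mem_of_superset (freeUF_compl_mem hfree (hIio.union hA)) hsup
  choose f hf using hlim'
  exact ⟨p, m, f, hfree, hmmono, tendsto_pi_nhds.mpr hf⟩

end StmtTenAux

/-- `X^ω` is countably compact iff for every countable family `γ` of discrete exact
sequences on `X` there is a common free ultrafilter `p` for which each member has a `p`-limit. -/
theorem stmt_10 {X : Type*} [TopologicalSpace X] [T1Space X] :
    CountablyCompact (ℕ → X) ↔
      ∀ γ : Set (ℕ → X), γ.Countable →
        (∀ ζ ∈ γ, Function.Injective ζ ∧ DiscreteTopology ↥(Set.range ζ)) →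
        ∃ p : Ultrafilter ℕ, FreeUF p ∧ ∀ ζ ∈ γ, ∃ x : X, PLim p ζ x := by
  constructor
  · -- forward direction
    intro hCC γ hγc _hγprop
    rcases γ.eq_empty_or_nonempty with rfl | hγne
    · refine ⟨Filter.hyperfilter ℕ, ?_, fun ζ hζ => absurd hζ (Set.notMem_empty ζ)⟩
      intro n
      exact (Set.finite_singleton n).notMem_hyperfilter
    obtain ⟨e, he⟩ := hγc.exists_eq_range hγne
    set Φ : ℕ → ℕ → X := fun n k => e k n with hΦ
    -- find a point in all tail closures
    have hcl : ∃ f : ℕ → X, ∀ n, f ∈ closure (Φ '' Set.Ici n) := by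
      by_contra hnot
      push_neg at hnot
      have hcov : (⋃ n, (closure (Φ '' Set.Ici n))ᶜ) = Set.univ := by
        rw [Set.eq_univ_iff_forall]
        intro f
        obtain ⟨n, hn⟩ := hnot f
        exact Set.mem_iUnion.mpr ⟨n, hn⟩
      obtain ⟨t, ht⟩ := hCC _ (fun n => isClosed_closure.isOpen_compl) hcov
      have : Φ (t.sup id) ∈ ⋃ n ∈ t, (closure (Φ '' Set.Ici n))ᶜ := ht ▸ Set.mem_univ _
      obtain ⟨n, hnt, hmem⟩ := Set.mem_iUnion₂.mp this
      exact hmem (subset_closure ⟨t.sup id, Finset.le_sup (f := id) hnt, rfl⟩)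
    obtain ⟨f, hf⟩ := hcl
    -- build the ultrafilter
    have hne : Filter.NeBot (Filter.atTop ⊓ Filter.comap Φ (nhds f)) := by
      rw [Filter.inf_neBot_iff]
      intro s hs t ht
      obtain ⟨n, hn⟩ := Filter.mem_atTop_sets.mp hs
      obtain ⟨U, hU, hUt⟩ := Filter.mem_comap.mp ht
      obtain ⟨V, hVU, hVopen, hfV⟩ := mem_nhds_iff.mp hU
      obtain ⟨y, hyV, hyim⟩ := mem_closure_iff.mp (hf n) V hVopen hfV
      obtain ⟨j, hj, rfl⟩ := hyim
      exact ⟨j, hn j hj, hUt (Set.mem_preimage.mpr (hVU hyV))⟩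
    set p : Ultrafilter ℕ := Ultrafilter.of (Filter.atTop ⊓ Filter.comap Φ (nhds f)) with hp
    have hple : (p : Filter ℕ) ≤ Filter.atTop ⊓ Filter.comap Φ (nhds f) := Ultrafilter.of_le _
    have hatTop : (p : Filter ℕ) ≤ Filter.atTop := hple.trans inf_le_left
    have hfree : FreeUF p := by
      intro n hn
      have h2 : {j : ℕ | n + 1 ≤ j} ∈ p := hatTop (Filter.mem_atTop (n + 1))
      obtain ⟨x, hx⟩ := Ultrafilter.nonempty_of_mem (p.inter_mem hn h2)
      simp only [Set.mem_inter_iff, Set.mem_singleton_iff, Set.mem_setOf_eq] at hx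
      omega
    have htend : Filter.Tendsto Φ (p : Filter ℕ) (nhds f) :=
      Filter.tendsto_iff_comap.mpr (hple.trans inf_le_right)
    refine ⟨p, hfree, ?_⟩
    intro ζ hζ
    rw [he] at hζ
    obtain ⟨k, rfl⟩ := hζ
    exact ⟨f k, ((continuous_apply k).tendsto f).comp htend⟩
  · -- backward direction
    intro hyp U hUopen hUcov
    by_contra hfin
    push_neg at hfin
    have hpt : ∀ n : ℕ, ∃ φ : ℕ → X, φ ∉ ⋃ k ∈ Finset.range (n + 1), U k := by
      intro n
      exact (Set.ne_univ_iff_exists_notMem _).mp (hfin (Finset.range (n + 1)))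
    choose Φ hΦ using hpt
    obtain ⟨p, σ, f, hfree, hσ, htend⟩ := key hyp Φ
    have hfU : f ∈ ⋃ n, U n := hUcov ▸ Set.mem_univ f
    obtain ⟨j, hj⟩ := Set.mem_iUnion.mp hfU
    have hmem : (fun n => Φ (σ n)) ⁻¹' (U j) ∈ p := htend ((hUopen j).mem_nhds hj)
    have hIci : ({n : ℕ | j ≤ n} : Set ℕ) ∈ p := by
      have : ({n : ℕ | n < j} : Set ℕ)ᶜ ∈ p := freeUF_compl_mem hfree (Set.finite_Iio j)
      refine Filter.mem_of_superset this ?_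
      intro n hn
      simpa using hn
    obtain ⟨n, hn⟩ := Ultrafilter.nonempty_of_mem (p.inter_mem hmem hIci)
    obtain ⟨hn1, hn2⟩ := hn
    have hjσ : j < σ n + 1 := by
      have : n ≤ σ n := hσ.le_apply
      have : j ≤ σ n := le_trans hn2 this
      omega
    exact hΦ (σ n) (Set.mem_biUnion (Finset.mem_range.mpr hjσ) hn1)
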